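/- There exists a computably enumerable equivalence relation R on the natural numbers with infinitely many equivalence classes (i.e., there is a function h : ℕ → ℕ such that ¬R (h i) (h j) whenever i ≠ j) such that every computable function f : ℕ → ℕ that is R-invariant (meaning R n m implies f n = f m) is constant. -/

import Mathlib

open Nat.Partrec (Code)
open Nat.Partrec.Code
open Encodable Denumerable

namespace CeerProof

/-- The "collapse point" associated to a code `c` and input `x`. -/
def cp (c : Code) (x : ℕ) : ℕ := 2 * Nat.pair (encode c) x + 1

/-- Base collapse relation: the collapse point of `(c, x)` is related to the value of
`eval c x`, when it converges. -/
def B (n m : ℕ) : Prop := ∃ c x, n = cp c x ∧ m ∈ eval c x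

/-- Symmetric reflexive closure of `B`. -/
def S (n m : ℕ) : Prop := B n m ∨ B m n ∨ n = m

/-- The ceer: reflexive-transitive closure of `S`. -/
def R : ℕ → ℕ → Prop := Relation.ReflTransGen S

lemma S_symm : Symmetric S := by
  rintro a b (h | h | h)
  · exact Or.inr (Or.inl h)
  · exact Or.inl h
  · exact Or.inr (Or.inr h.symm)

lemma R_equivalence : Equivalence R :=
  ⟨fun _ => Relation.ReflTransGen.refl,
   fun h => by haveI : Std.Symm S := ⟨fun _ _ h => S_symm h⟩; exact Std.Symm.symm (r := Relation.ReflTransGen S) _ _ h,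
   fun h1 h2 => Relation.ReflTransGen.trans h1 h2⟩

lemma cp_inj {c c' : Code} {x x' : ℕ} (h : cp c x = cp c' x') : c = c' ∧ x = x' := by
  unfold cp at h
  have h2 : Nat.pair (encode c) x = Nat.pair (encode c') x' := by omega
  have h3 := congrArg Nat.unpair h2
  rw [Nat.unpair_pair, Nat.unpair_pair] at h3
  have h4 : encode c = encode c' := congrArg Prod.fst h3
  exact ⟨Encodable.encode_injective h4, congrArg Prod.snd h3⟩

lemma B_odd {n m : ℕ} (h : B n m) : n % 2 = 1 := by
  obtain ⟨c, x, rfl, -⟩ := h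
  simp [cp, Nat.add_mul_mod_self_left]

lemma B_unique {n m m' : ℕ} (h : B n m) (h' : B n m') : m = m' := by
  obtain ⟨c, x, rfl, hm⟩ := h
  obtain ⟨c', x', he, hm'⟩ := h'
  obtain ⟨rfl, rfl⟩ := cp_inj he
  exact Part.mem_unique hm hm'

/-! ### The "sink" analysis, used to show there are infinitely many classes -/

open Classical in
noncomputable def F (n : ℕ) : Option ℕ :=
  if h : ∃ m, B n m then some h.choose else none

lemma F_eq_some {n m : ℕ} (h : B n m) : F n = some m := by
  have hex : ∃ m, B n m := ⟨m, h⟩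
  rw [F, dif_pos hex]
  exact congrArg some (B_unique hex.choose_spec h)

lemma F_eq_none {n : ℕ} (h : n % 2 = 0) : F n = none := by
  rw [F, dif_neg]
  rintro ⟨m, hm⟩
  have := B_odd hm
  omega

noncomputable def iter : ℕ → ℕ → Option ℕ
  | 0, n => some n
  | k + 1, n => (F n).bind (iter k)

lemma iter_add (a b n : ℕ) : iter (a + b) n = (iter a n).bind (iter b) := by
  induction a generalizing n with
  | zero => simp [iter]
  | succ a ih =>
    have : a + 1 + b = (a + b) + 1 := by omega
    rw [this]
    show (F n).bind (iter (a + b)) = ((F n).bind (iter a)).bind (iter b)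
    rw [Option.bind_assoc]
    simp only [ih]

/-- `n` eventually reaches the even number `e` by following `F`. -/
def Reaches (n e : ℕ) : Prop := e % 2 = 0 ∧ ∃ k, iter k n = some e

lemma reaches_self {n : ℕ} (h : n % 2 = 0) : Reaches n n := ⟨h, 0, rfl⟩

lemma iter_of_even {e : ℕ} (he : e % 2 = 0) :
    ∀ j x, iter j e = some x → x = e := by
  intro j x hx
  cases j with
  | zero => exact (Option.some_inj.mp hx).symm
  | succ j =>
    rw [show iter (j+1) e = (F e).bind (iter j) from rfl, F_eq_none he] at hx
    simp at hx

lemma reaches_unique {n e e' : ℕ} (h : Reaches n e) (h' : Reaches n e') : e = e' := by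
  obtain ⟨he, k, hk⟩ := h
  obtain ⟨he', k', hk'⟩ := h'
  rcases le_total k k' with hle | hle
  · have : iter k' n = iter (k' - k) e := by
      conv_lhs => rw [show k' = k + (k' - k) by omega, iter_add, hk]
      rfl
    rw [this] at hk'
    exact (iter_of_even he _ _ hk').symm
  · have : iter k n = iter (k - k') e' := by
      conv_lhs => rw [show k = k' + (k - k') by omega, iter_add, hk']
      rfl
    rw [this] at hk
    exact iter_of_even he' _ _ hk

lemma B_reaches_iff {n m : ℕ} (h : B n m) (e : ℕ) : Reaches n e ↔ Reaches m e := by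
  have hF : F n = some m := F_eq_some h
  constructor
  · rintro ⟨he, k, hk⟩
    cases k with
    | zero =>
      have : n = e := Option.some_inj.mp hk
      have := B_odd h
      omega
    | succ k =>
      rw [show iter (k+1) n = (F n).bind (iter k) from rfl, hF] at hk
      exact ⟨he, k, hk⟩
  · rintro ⟨he, k, hk⟩
    refine ⟨he, k + 1, ?_⟩
    rw [show iter (k+1) n = (F n).bind (iter k) from rfl, hF]
    exact hk

lemma R_reaches_iff {n m : ℕ} (h : R n m) : ∀ e, Reaches n e ↔ Reaches m e := by
  induction h with
  | refl => exact fun _ => Iff.rfl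
  | tail _ hS ih =>
    intro e
    rcases hS with hB | hB | rfl
    · exact (ih e).trans (B_reaches_iff hB e)
    · exact (ih e).trans (B_reaches_iff hB e).symm
    · exact ih e

lemma not_R_of_even {i j : ℕ} (h : i ≠ j) : ¬ R (2 * i) (2 * j) := by
  intro hR
  have h1 : Reaches (2 * i) (2 * i) := reaches_self (by omega)
  have h2 : Reaches (2 * j) (2 * j) := reaches_self (by omega)
  have h3 : Reaches (2 * i) (2 * j) := (R_reaches_iff hR (2 * j)).mpr h2
  have := reaches_unique h1 h3
  omega

/-! ### Semidecidability of `R` -/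

/-- Bounded (decidable) version of `B`. -/
def bsb (s n m : ℕ) : Bool :=
  decide (n % 2 = 1) &&
    decide (evaln s (ofNat Code (n / 2).unpair.1) (n / 2).unpair.2 = some m)

lemma bsb_sound {s n m : ℕ} (h : bsb s n m = true) : B n m := by
  rw [bsb, Bool.and_eq_true, decide_eq_true_eq, decide_eq_true_eq] at h
  obtain ⟨h1, h2⟩ := h
  refine ⟨ofNat Code (n / 2).unpair.1, (n / 2).unpair.2, ?_, evaln_sound (k := s) ?_⟩
  · rw [cp, Denumerable.encode_ofNat, Nat.pair_unpair]
    omega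
  · rw [Option.mem_def]
    exact h2

lemma bsb_complete {n m : ℕ} (h : B n m) : ∃ s, bsb s n m = true := by
  obtain ⟨c, x, rfl, hm⟩ := h
  obtain ⟨s, hs⟩ := evaln_complete.mp hm
  refine ⟨s, ?_⟩
  have hdiv : cp c x / 2 = Nat.pair (encode c) x := by unfold cp; omega
  rw [bsb, Bool.and_eq_true, decide_eq_true_eq, decide_eq_true_eq, hdiv, Nat.unpair_pair]
  refine ⟨B_odd ⟨c, x, rfl, hm⟩, ?_⟩
  rw [Denumerable.ofNat_encode]
  exact Option.mem_def.mp (evaln_mono le_rfl hs)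

lemma bsb_mono {s s' n m : ℕ} (hss : s ≤ s') (h : bsb s n m = true) :
    bsb s' n m = true := by
  rw [bsb, Bool.and_eq_true, decide_eq_true_eq, decide_eq_true_eq] at h ⊢
  refine ⟨h.1, ?_⟩
  exact Option.mem_def.mp (evaln_mono hss (Option.mem_def.mpr h.2))

/-- Bounded (decidable) version of `S`. -/
def ssb (s n m : ℕ) : Bool := bsb s n m || bsb s m n || decide (n = m)

lemma ssb_sound {s n m : ℕ} (h : ssb s n m = true) : S n m := by
  rw [ssb, Bool.or_eq_true, Bool.or_eq_true, decide_eq_true_eq] at h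
  rcases h with (h | h) | h
  · exact Or.inl (bsb_sound h)
  · exact Or.inr (Or.inl (bsb_sound h))
  · exact Or.inr (Or.inr h)

lemma ssb_complete {n m : ℕ} (h : S n m) : ∃ s, ssb s n m = true := by
  rcases h with h | h | rfl
  · obtain ⟨s, hs⟩ := bsb_complete h
    exact ⟨s, by rw [ssb, hs]; simp⟩
  · obtain ⟨s, hs⟩ := bsb_complete h
    exact ⟨s, by rw [ssb, hs]; simp⟩
  · exact ⟨0, by simp [ssb]⟩

lemma ssb_mono {s s' n m : ℕ} (hss : s ≤ s') (h : ssb s n m = true) :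
    ssb s' n m = true := by
  rw [ssb, Bool.or_eq_true, Bool.or_eq_true] at h ⊢
  rcases h with (h | h) | h
  · exact Or.inl (Or.inl (bsb_mono hss h))
  · exact Or.inl (Or.inr (bsb_mono hss h))
  · exact Or.inr h

/-- One step of the chain verifier. -/
def stp (s : ℕ) (a : Bool × ℕ) (x : ℕ) : Bool × ℕ := (a.1 && ssb s a.2 x, x)

lemma foldl_stp_snd (s : ℕ) : ∀ (l : List ℕ) (n : ℕ) (b : Bool),
    (l.foldl (stp s) (b, n)).2 = (n :: l).getLast (List.cons_ne_nil _ _) := by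
  intro l
  induction l with
  | nil => intro n b; rfl
  | cons a t ih =>
    intro n b
    show (t.foldl (stp s) (b && ssb s n a, a)).2 = _
    rw [ih a (b && ssb s n a), List.getLast_cons_cons]

lemma foldl_stp_fst (s : ℕ) : ∀ (l : List ℕ) (n : ℕ) (b : Bool),
    ((l.foldl (stp s) (b, n)).1 = true ↔
      (b = true ∧ List.Chain (fun a b' => ssb s a b' = true) n l)) := by
  intro l
  induction l with
  | nil =>
    intro n b
    simp [List.Chain.nil]
  | cons a t ih =>
    intro n b
    show ((t.foldl (stp s) (b && ssb s n a, a)).1 = true ↔ _)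
    rw [ih a (b && ssb s n a), Bool.and_eq_true, List.Chain, List.Chain, List.chain_cons]
    tauto

/-- The semidecision verifier for `R`: `k` encodes a stage `s` and a chain `l`. -/
def Check (p : ℕ × ℕ) (k : ℕ) : Bool :=
  let q := ofNat (ℕ × List ℕ) k
  let r := q.2.foldl (stp q.1) (true, p.1)
  r.1 && decide (r.2 = p.2)

lemma chain_ssb_of_chain_S {l : List ℕ} :
    ∀ {n : ℕ}, List.Chain S n l → ∃ s, List.Chain (fun a b => ssb s a b = true) n l := by
  induction l with
  | nil => exact fun _ => ⟨0, List.Chain.nil⟩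
  | cons a t ih =>
    intro n h
    rw [List.Chain, List.chain_cons] at h
    obtain ⟨s1, hs1⟩ := ssb_complete h.1
    obtain ⟨s2, hs2⟩ := ih h.2
    refine ⟨max s1 s2, List.chain_cons.mpr ⟨ssb_mono (le_max_left _ _) hs1, ?_⟩⟩
    exact List.Chain.imp (fun a b h => ssb_mono (le_max_right s1 s2) h) hs2

lemma check_iff (p : ℕ × ℕ) : (∃ k, Check p k = true) ↔ R p.1 p.2 := by
  constructor
  · rintro ⟨k, hk⟩
    rw [Check, Bool.and_eq_true, decide_eq_true_eq] at hk
    set q := ofNat (ℕ × List ℕ) k with hq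
    obtain ⟨h1, h2⟩ := hk
    rw [foldl_stp_fst] at h1
    rw [foldl_stp_snd] at h2
    have hchain : List.Chain S p.1 q.2 :=
      List.Chain.imp (fun a b h => ssb_sound h) h1.2
    exact List.relationReflTransGen_of_exists_isChain_cons q.2 hchain h2
  · intro hR
    obtain ⟨l, hl1, hl2⟩ := List.exists_isChain_cons_of_relationReflTransGen hR
    obtain ⟨s, hs⟩ := chain_ssb_of_chain_S hl1
    refine ⟨encode (s, l), ?_⟩
    rw [Check, Bool.and_eq_true, decide_eq_true_eq, Denumerable.ofNat_encode]
    constructor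
    · rw [foldl_stp_fst]; exact ⟨rfl, hs⟩
    · rw [foldl_stp_snd]; exact hl2

lemma primrec_bsb : Primrec fun t : ℕ × ℕ × ℕ => bsb t.1 t.2.1 t.2.2 := by
  have hhalf : Primrec fun t : ℕ × ℕ × ℕ => t.2.1 / 2 :=
    Primrec.nat_div.comp (Primrec.fst.comp Primrec.snd) (Primrec.const 2)
  have hodd : Primrec fun t : ℕ × ℕ × ℕ => decide (t.2.1 % 2 = 1) :=
    PrimrecPred.decide (Primrec.eq.comp
      (Primrec.nat_mod.comp (Primrec.fst.comp Primrec.snd) (Primrec.const 2))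
      (Primrec.const 1))
  have hev : Primrec fun t : ℕ × ℕ × ℕ =>
      evaln t.1 (ofNat Code (t.2.1 / 2).unpair.1) (t.2.1 / 2).unpair.2 := by
    have := primrec_evaln
    exact this.comp
      ((Primrec.fst.pair
        ((Primrec.ofNat Code).comp (Primrec.fst.comp (Primrec.unpair.comp hhalf)))).pair
        (Primrec.snd.comp (Primrec.unpair.comp hhalf)))
  exact Primrec.and.comp hodd
    (PrimrecPred.decide (Primrec.eq.comp hev
      (Primrec.option_some.comp (Primrec.snd.comp Primrec.snd))))

lemma primrec_ssb : Primrec fun t : ℕ × ℕ × ℕ => ssb t.1 t.2.1 t.2.2 := by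
  have h1 : Primrec fun t : ℕ × ℕ × ℕ => bsb t.1 t.2.2 t.2.1 :=
    primrec_bsb.comp
      (Primrec.fst.pair ((Primrec.snd.comp Primrec.snd).pair (Primrec.fst.comp Primrec.snd)))
  exact Primrec.or.comp
    (Primrec.or.comp primrec_bsb h1)
    (PrimrecPred.decide (Primrec.eq.comp (Primrec.fst.comp Primrec.snd) (Primrec.snd.comp Primrec.snd)))

set_option maxHeartbeats 1000000 in
lemma primrec_check : Primrec₂ Check := by
  have hq : Primrec fun a : (ℕ × ℕ) × ℕ => ofNat (ℕ × List ℕ) a.2 :=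
    (Primrec.ofNat (ℕ × List ℕ)).comp Primrec.snd
  have hl : Primrec fun a : (ℕ × ℕ) × ℕ => (ofNat (ℕ × List ℕ) a.2).2 :=
    Primrec.snd.comp hq
  have hs : Primrec fun a : (ℕ × ℕ) × ℕ => (ofNat (ℕ × List ℕ) a.2).1 :=
    Primrec.fst.comp hq
  have hg : Primrec fun a : (ℕ × ℕ) × ℕ => ((true, a.1.1) : Bool × ℕ) :=
    (Primrec.const true).pair (Primrec.fst.comp Primrec.fst)
  have hstep : Primrec₂ fun (a : (ℕ × ℕ) × ℕ) (p : (Bool × ℕ) × ℕ) =>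
      stp (ofNat (ℕ × List ℕ) a.2).1 p.1 p.2 := by
    have hss : Primrec fun x : ((ℕ × ℕ) × ℕ) × (Bool × ℕ) × ℕ =>
        ssb (ofNat (ℕ × List ℕ) x.1.2).1 x.2.1.2 x.2.2 :=
      primrec_ssb.comp
        ((hs.comp Primrec.fst).pair
          ((Primrec.snd.comp (Primrec.fst.comp Primrec.snd)).pair
            (Primrec.snd.comp Primrec.snd)))
    have hbase : Primrec fun x : ((ℕ × ℕ) × ℕ) × (Bool × ℕ) × ℕ =>
        ((x.2.1.1 && ssb (ofNat (ℕ × List ℕ) x.1.2).1 x.2.1.2 x.2.2, x.2.2) : Bool × ℕ) :=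
      (Primrec.and.comp
        (Primrec.fst.comp (Primrec.fst.comp Primrec.snd)) hss).pair
        (Primrec.snd.comp Primrec.snd)
    exact hbase.of_eq fun x => rfl
  have hfold : Primrec fun a : (ℕ × ℕ) × ℕ =>
      (ofNat (ℕ × List ℕ) a.2).2.foldl (stp (ofNat (ℕ × List ℕ) a.2).1) (true, a.1.1) :=
    Primrec.list_foldl hl hg hstep
  have : Primrec fun a : (ℕ × ℕ) × ℕ =>
      (((ofNat (ℕ × List ℕ) a.2).2.foldl (stp (ofNat (ℕ × List ℕ) a.2).1) (true, a.1.1)).1 &&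
        decide ((((ofNat (ℕ × List ℕ) a.2).2.foldl (stp (ofNat (ℕ × List ℕ) a.2).1)
          (true, a.1.1))).2 = a.1.2)) :=
    Primrec.and.comp (Primrec.fst.comp hfold)
      (PrimrecPred.decide (Primrec.eq.comp (Primrec.snd.comp hfold) (Primrec.snd.comp Primrec.fst)))
  exact this.of_eq fun a => rfl

lemma rePred_R : REPred (fun p : ℕ × ℕ => R p.1 p.2) := by
  have hCheck : Computable₂ Check := Primrec₂.to_comp primrec_check
  have hrf : Partrec fun p : ℕ × ℕ =>
      Nat.rfind fun k => (Part.some (Check p k) : Part Bool) :=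
    Partrec.rfind hCheck.partrec₂
  have hmap : Partrec fun p : ℕ × ℕ =>
      (Nat.rfind fun k => (Part.some (Check p k) : Part Bool)).map fun _ => () :=
    hrf.map (((Computable.const ()).comp Computable.fst).to₂)
  refine hmap.of_eq fun p => ?_
  apply Part.ext
  intro u
  rw [Part.mem_map_iff, Part.mem_assert_iff]
  constructor
  · rintro ⟨y, hy, -⟩
    have h1 : Check p y = true := (Part.mem_some_iff.mp (Nat.rfind_spec hy)).symm
    exact ⟨(check_iff p).mp ⟨y, h1⟩, Part.mem_some _⟩
  · rintro ⟨hR, -⟩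
    obtain ⟨k, hk⟩ := (check_iff p).mpr hR
    have hdom : (Nat.rfind fun k => (Part.some (Check p k) : Part Bool)).Dom := by
      apply Nat.rfind_dom.mpr
      exact ⟨k, Part.mem_some_iff.mpr hk.symm, fun _ => trivial⟩
    obtain ⟨y, hy⟩ := Part.dom_iff_mem.mp hdom
    exact ⟨y, hy, rfl⟩

lemma constant_of_invariant (f : ℕ → ℕ) (hf : Computable f)
    (hinv : ∀ n m : ℕ, R n m → f n = f m) : ∃ c : ℕ, ∀ n : ℕ, f n = c := by
  refine ⟨f 0, fun n => ?_⟩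
  by_contra hne
  set g : ℕ → ℕ := fun x => cond (decide (f x = f 0)) n 0 with hgdef
  have hg : Computable g :=
    Computable.cond (Primrec.eq.decide.to_comp.comp hf (Computable.const (f 0)))
      (Computable.const n) (Computable.const 0)
  have hcp : Computable fun p : Code × ℕ => cp p.1 p.2 := by
    have : Primrec fun p : Code × ℕ => 2 * Nat.pair (encode p.1) p.2 + 1 :=
      Primrec.succ.comp
        (Primrec.nat_mul.comp (Primrec.const 2)
          (Primrec₂.natPair.comp (Primrec.encode.comp Primrec.fst) Primrec.snd))
    exact this.to_comp
  have hfc : Partrec₂ fun (c : Code) (x : ℕ) => (Part.some (g (cp c x)) : Part ℕ) := by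
    have : Computable₂ fun (c : Code) (x : ℕ) => g (cp c x) :=
      (hg.comp hcp).to₂
    exact this.partrec₂
  obtain ⟨cd, hcd⟩ := fixed_point₂ hfc
  set o := cp cd 0 with ho
  have hB : B o (g o) := ⟨cd, 0, rfl, by rw [hcd]; exact Part.mem_some _⟩
  have hfo : f o = f (g o) := hinv _ _ (Relation.ReflTransGen.single (Or.inl hB))
  by_cases h1 : f o = f 0
  · have hgo : g o = n := by simp [hgdef, h1]
    rw [hgo] at hfo
    exact hne (hfo.symm.trans h1)
  · have hgo : g o = 0 := by simp [hgdef, h1]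
    rw [hgo] at hfo
    exact h1 hfo

end CeerProof

/-- There exists a computably enumerable equivalence relation `R` on `ℕ` with infinitely
many equivalence classes such that every computable `R`-invariant function `f : ℕ → ℕ`
is constant. -/
theorem exists_ceer_infinite_no_nonconstant_invariant_computable :
    ∃ R : ℕ → ℕ → Prop,
      Equivalence R ∧
      REPred (fun p : ℕ × ℕ => R p.1 p.2) ∧
      (∃ h : ℕ → ℕ, ∀ i j : ℕ, i ≠ j → ¬ R (h i) (h j)) ∧
      (∀ f : ℕ → ℕ, Computable f → (∀ n m : ℕ, R n m → f n = f m) →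
        ∃ c : ℕ, ∀ n : ℕ, f n = c) := by
  exact ⟨CeerProof.R, CeerProof.R_equivalence, CeerProof.rePred_R,
    ⟨fun i => 2 * i, fun i j hij => CeerProof.not_R_of_even hij⟩,
    CeerProof.constant_of_invariant⟩
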